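/- The Lobachevsky splines satisfy the three-term recurrence relation: for n ≥ 2 and all x ∈ ℝ, (n−1) f_n(x) = ((na + x)/(2a)) f_{n−1}(x + a) + ((na − x)/(2a)) f_{n−1}(x − a), where for n = 2 the function f₁ is taken right-continuous on [−a, a) (i.e., f₁(x) = 1/(2a) for −a ≤ x < a, 0 otherwise). -/

import Mathlib

/-- Truncated power function: `y₊^m = y^m` if `y > 0`, else `0`. -/
noncomputable def tpow (y : ℝ) (m : ℕ) : ℝ := if 0 < y then y ^ m else 0

/-- Lobachevsky splines: `g a 1` is the (right-continuous) uniform density on `[-a, a)`,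
and for `n ≥ 2`, `g a n` is given by the explicit truncated-power formula. -/
noncomputable def g (a : ℝ) (n : ℕ) (x : ℝ) : ℝ :=
  if n = 1 then (if -a ≤ x ∧ x < a then 1 / (2 * a) else 0)
  else (1 / ((2 * a) ^ n * (Nat.factorial (n - 1)))) *
    ∑ k ∈ Finset.range (n + 1),
      (-1 : ℝ) ^ k * (n.choose k) * tpow (x + ((n : ℝ) - 2 * k) * a) (n - 1)

lemma tpow_mul_self (t : ℝ) (m : ℕ) : t * tpow t m = tpow t (m+1) := by
  unfold tpow; split_ifs with h
  · ring
  · simp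

lemma key (a x : ℝ) (m j : ℕ) :
    (((m+1).choose (j+1)):ℝ) * (x + (((m:ℝ)+1) - 2*((j:ℝ)+1)) * a)
      = (m.choose (j+1)) * (((m:ℝ)+1)*a + x) - (m.choose j) * (((m:ℝ)+1)*a - x) := by
  have hP : (((m+1).choose (j+1)) : ℝ) = m.choose j + m.choose (j+1) := by
    rw [Nat.choose_succ_succ]; push_cast; ring
  have h1 : ((m:ℝ)+1) * m.choose j = ((j:ℝ)+1) * ((m+1).choose (j+1)) := by
    have := Nat.add_one_mul_choose_eq m j
    have := congrArg (Nat.cast (R := ℝ)) this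
    push_cast at this
    linarith
  have h2 : ((m:ℝ)+1) * m.choose (j+1) = ((m:ℝ)-(j:ℝ)) * ((m+1).choose (j+1)) := by
    have h3 : ((m:ℝ)+1) * m.choose (j+1) = ((m:ℝ)+1) * ((m+1).choose (j+1)) - ((m:ℝ)+1) * m.choose j := by
      rw [hP]; ring
    rw [h3, h1]; ring
  linear_combination x * hP - a * h2 + a * h1

lemma sum_shift (N : ℕ) (F G H : ℕ → ℝ) (h0 : H 0 = F 0) (hs : ∀ k, H (k+1) = F (k+1) + G k)
    (hN : F (N+1) = 0) :
    ∑ k ∈ Finset.range (N+2), H k = ∑ k ∈ Finset.range (N+1), F k + ∑ k ∈ Finset.range (N+1), G k := by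
  rw [Finset.sum_range_succ' H (N+1)]
  simp only [hs, h0, Finset.sum_add_distrib]
  rw [add_right_comm, ← Finset.sum_range_succ' F (N+1), Finset.sum_range_succ F (N+1), hN]
  ring

lemma hsum (a x : ℝ) (p : ℕ) :
    (((p:ℝ)+2)*a + x) * (∑ k ∈ Finset.range (p+2),
        (-1:ℝ)^k * ((p+1).choose k) * tpow (x + a + (((p:ℝ)+1) - 2*(k:ℝ)) * a) p)
  + (((p:ℝ)+2)*a - x) * (∑ k ∈ Finset.range (p+2),
        (-1:ℝ)^k * ((p+1).choose k) * tpow (x - a + (((p:ℝ)+1) - 2*(k:ℝ)) * a) p)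
  = ∑ k ∈ Finset.range (p+3),
      (-1:ℝ)^k * ((p+2).choose k) * tpow (x + (((p:ℝ)+2) - 2*(k:ℝ)) * a) (p+1) := by
  set F : ℕ → ℝ := fun k =>
    (((p:ℝ)+2)*a + x) * ((-1:ℝ)^k * ((p+1).choose k) * tpow (x + (((p:ℝ)+2) - 2*(k:ℝ)) * a) p) with hF
  set G : ℕ → ℝ := fun k =>
    (((p:ℝ)+2)*a - x) * ((-1:ℝ)^k * ((p+1).choose k) * tpow (x + (((p:ℝ)+2) - 2*((k:ℝ)+1)) * a) p) with hG
  set H : ℕ → ℝ := fun k =>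
    (-1:ℝ)^k * ((p+2).choose k) * tpow (x + (((p:ℝ)+2) - 2*(k:ℝ)) * a) (p+1) with hH
  have lhs1 : (∑ k ∈ Finset.range (p+2),
        (-1:ℝ)^k * ((p+1).choose k) * tpow (x + a + (((p:ℝ)+1) - 2*(k:ℝ)) * a) p)
      = ∑ k ∈ Finset.range (p+2), ((-1:ℝ)^k * ((p+1).choose k) * tpow (x + (((p:ℝ)+2) - 2*(k:ℝ)) * a) p) := by
    refine Finset.sum_congr rfl fun k _ => ?_
    have : x + a + (((p:ℝ)+1) - 2*(k:ℝ)) * a = x + (((p:ℝ)+2) - 2*(k:ℝ)) * a := by ring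
    rw [this]
  have lhs2 : (∑ k ∈ Finset.range (p+2),
        (-1:ℝ)^k * ((p+1).choose k) * tpow (x - a + (((p:ℝ)+1) - 2*(k:ℝ)) * a) p)
      = ∑ k ∈ Finset.range (p+2), ((-1:ℝ)^k * ((p+1).choose k) * tpow (x + (((p:ℝ)+2) - 2*((k:ℝ)+1)) * a) p) := by
    refine Finset.sum_congr rfl fun k _ => ?_
    have : x - a + (((p:ℝ)+1) - 2*(k:ℝ)) * a = x + (((p:ℝ)+2) - 2*((k:ℝ)+1)) * a := by ring
    rw [this]
  rw [lhs1, lhs2, Finset.mul_sum, Finset.mul_sum]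
  have hrhs : ∑ k ∈ Finset.range (p+3), H k
      = ∑ k ∈ Finset.range (p+2), F k + ∑ k ∈ Finset.range (p+2), G k := by
    refine sum_shift (p+1) F G H ?_ ?_ ?_
    · simp only [hF, hH]
      norm_num
      rw [← tpow_mul_self]
      ring
    · intro k
      simp only [hF, hG, hH]
      have harg : ((↑(k+1):ℝ)) = (k:ℝ)+1 := by push_cast; ring
      rw [harg]
      set t := x + (((p:ℝ)+2) - 2*((k:ℝ)+1)) * a with ht
      have h2 := tpow_mul_self t p
      have h1 := key a x (p+1) k
      push_cast at h1
      rw [← h2]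
      linear_combination ((-1:ℝ)^(k+1) * tpow t p) * h1
    · simp only [hF]
      have : ((p+1).choose (p+2) : ℝ) = 0 := by
        rw [Nat.choose_eq_zero_of_lt (by omega)]; norm_num
      rw [this]; ring
  exact (hrhs).symm

set_option maxHeartbeats 1600000 in
theorem lob_three_term_recurrence (a : ℝ) (ha : 0 < a) (n : ℕ) (hn : 2 ≤ n) (x : ℝ) :
    ((n : ℝ) - 1) * g a n x =
      (((n : ℝ) * a + x) / (2 * a)) * g a (n - 1) (x + a) +
      (((n : ℝ) * a - x) / (2 * a)) * g a (n - 1) (x - a) := by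
  have ha' : a ≠ 0 := ne_of_gt ha
  rcases eq_or_lt_of_le hn with h2 | h3
  · subst h2
    push_cast
    simp only [g, tpow]
    norm_num [Finset.sum_range_succ]
    split_ifs
    all_goals try simp only [not_and_or, not_lt, not_le] at *
    all_goals try casesm* _ ∧ _, _ ∨ _
    all_goals first
      | linarith
      | (field_simp; ring1)
      | (have hx : x = 0 := (by linarith); subst hx; ring_nf)
      | (have hx : x = 0 := (by linarith); subst hx; field_simp)
      | (have hx : x = 2*a := (by linarith); subst hx; field_simp; try ring1)
      | (have hx : x = -(2*a) := (by linarith); subst hx; field_simp; try ring1)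
  · obtain ⟨p, rfl⟩ : ∃ p, n = p + 3 := ⟨n-3, by omega⟩
    have h := hsum a x (p+1)
    have e1 : p + 3 - 1 = p + 2 := rfl
    rw [e1]
    simp only [g, if_neg (show ¬(p+3=1) by omega), if_neg (show ¬(p+2=1) by omega)]
    have e2 : p + 3 - 1 = p + 2 := rfl
    have e3 : p + 2 - 1 = p + 1 := rfl
    rw [e2, e3]
    simp only [Nat.factorial_succ]
    push_cast at h ⊢
    ring_nf at h ⊢
    rw [← h]
    have hf : ((p.factorial : ℕ) : ℝ) ≠ 0 := by
      exact_mod_cast Nat.cast_ne_zero.mpr p.factorial_ne_zero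
    have hp1 : ((p:ℝ)+1) ≠ 0 := by positivity
    have hp2 : ((p:ℝ)+2) ≠ 0 := by positivity
    field_simp
    ring_nf
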